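/- Let I ⊆ S be a polymatroidal ideal satisfying the strong exchange property, and let ℓ ≥ 0 be an integer. Then the ideal I_{>ℓ}, generated by those u ∈ G(I) whose support has more than ℓ elements, is again polymatroidal. -/
import Mathlib

lemma capp {n : ℕ} (a : Fin n →₀ ℕ) (i j k : Fin n) :
    ((a - Finsupp.single i 1 + Finsupp.single j 1 : Fin n →₀ ℕ)) k
      = a k - (if i = k then 1 else 0) + (if j = k then 1 else 0) := by
  simp [Finsupp.tsub_apply, Finsupp.single_apply]

/-- let `A` be the set of (exponent vectors of the) minimal monomial generators of a
polymatroidal ideal generated in the single degree `d` which satisfies the strong exchange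
property. Then for every `ℓ ≥ 0` the set of those elements of `A` whose support has more than `ℓ`
elements (the generators of `I_{>ℓ}`) again satisfies the polymatroidal exchange property. -/
theorem stmt_7 {n : ℕ} (d : ℕ) (A : Set (Fin n →₀ ℕ)) (ℓ : ℕ)
    (hdeg : ∀ a ∈ A, (∑ i, a i) = d)
    (hpoly : ∀ a ∈ A, ∀ b ∈ A, ∀ i : Fin n, b i < a i →
      ∃ j : Fin n, a j < b j ∧ (a - Finsupp.single i 1 + Finsupp.single j 1) ∈ A)
    (hstrong : ∀ a ∈ A, ∀ b ∈ A, ∀ i j : Fin n, b i < a i → a j < b j →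
      (a - Finsupp.single i 1 + Finsupp.single j 1) ∈ A) :
    ∀ a ∈ A, ℓ < a.support.card → ∀ b ∈ A, ℓ < b.support.card →
      ∀ i : Fin n, b i < a i → ∃ j : Fin n, a j < b j ∧
        ((a - Finsupp.single i 1 + Finsupp.single j 1) ∈ A ∧
         ℓ < (a - Finsupp.single i 1 + Finsupp.single j 1 : Fin n →₀ ℕ).support.card) := by
  intro a ha hca b hb hcb i hbi
  have hex : ∃ j : Fin n, a j < b j := by
    by_contra h
    push_neg at h
    have : (∑ k, b k) < (∑ k, a k) :=
      Finset.sum_lt_sum (fun k _ => h k) ⟨i, Finset.mem_univ i, hbi⟩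
    rw [hdeg a ha, hdeg b hb] at this
    exact lt_irrefl d this
  have hai : 0 < a i := lt_of_le_of_lt (Nat.zero_le _) hbi
  have hisup : i ∈ a.support := Finsupp.mem_support_iff.2 hai.ne'
  by_cases hz : ∃ j : Fin n, a j < b j ∧ a j = 0
  · obtain ⟨j, hj, haj⟩ := hz
    have hij : j ≠ i := fun e => by subst e; omega
    refine ⟨j, hj, hstrong a ha b hb i j hbi hj, ?_⟩
    have hsub : insert j (a.support.erase i) ⊆
        (a - Finsupp.single i 1 + Finsupp.single j 1).support := by
      intro k hk
      rw [Finsupp.mem_support_iff, capp]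
      rcases Finset.mem_insert.1 hk with rfl | hk
      · rw [if_neg (fun e => hij e.symm), if_pos rfl]
        omega
      · obtain ⟨hki, hks⟩ := Finset.mem_erase.1 hk
        have := Finsupp.mem_support_iff.1 hks
        rw [if_neg (fun e => hki e.symm)]
        split_ifs <;> omega
    calc ℓ < a.support.card := hca
    _ = (a.support.erase i).card + 1 := by
        rw [Finset.card_erase_of_mem hisup]; omega
    _ = (insert j (a.support.erase i)).card := by
        rw [Finset.card_insert_of_notMem]
        simp [Finsupp.mem_support_iff, haj]
    _ ≤ _ := Finset.card_le_card hsub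
  · push_neg at hz
    obtain ⟨j, hj⟩ := hex
    have hij : j ≠ i := fun e => by subst e; omega
    refine ⟨j, hj, hstrong a ha b hb i j hbi hj, ?_⟩
    by_cases h2 : 2 ≤ a i
    · have hsub : a.support ⊆
          (a - Finsupp.single i 1 + Finsupp.single j 1).support := by
        intro k hk
        have hk0 := Finsupp.mem_support_iff.1 hk
        rw [Finsupp.mem_support_iff, capp]
        by_cases h1 : i = k
        · subst h1; rw [if_pos rfl]; split_ifs <;> omega
        · rw [if_neg h1]; split_ifs <;> omega
      exact lt_of_lt_of_le hca (Finset.card_le_card hsub)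
    · -- a i = 1, b.support ⊆ new support
      have hai1 : a i = 1 := by omega
      have hsub : b.support ⊆
          (a - Finsupp.single i 1 + Finsupp.single j 1).support := by
        intro k hk
        have hbk := Finsupp.mem_support_iff.1 hk
        have hki : k ≠ i := fun e => by subst e; omega
        have hak : 0 < a k := by
          by_contra h
          exact absurd (by omega : a k = 0) (fun e => by
            have := hz k (by omega); omega)
        rw [Finsupp.mem_support_iff, capp, if_neg (fun e => hki e.symm)]
        split_ifs <;> omega
      exact lt_of_lt_of_le hcb (Finset.card_le_card hsub)
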